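/- Let q = 2h+3 with h ≥ 0 an integer, λ_q = 2 cos(π/q), f_q the Hurwitz–Nakada map, θ_1(x) = −1/(x + λ_q) and θ_2(x) = −1/(x + 2λ_q). Then the f_q-orbit of −λ_q/2 is given by: f_q^{i}(−λ_q/2) = θ_1^{∘(h−i)}(θ_2(θ_1^{∘h}(0))) for every 0 ≤ i ≤ h, and f_q^{h+1+i}(−λ_q/2) = θ_1^{∘(h−i)}(0) for every 0 ≤ i ≤ h. In particular f_q^{q−2}(−λ_q/2) = 0, and the q−1 points f_q^{i}(−λ_q/2) for 0 ≤ i ≤ q−2 are pairwise distinct, so the orbit of −λ_q/2 under f_q has exactly q−1 = κ_q + 1 elements. -/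
import Mathlib


/-- `λ_q = 2 cos (π / q)`. -/
noncomputable def lam (q : ℕ) : ℝ := 2 * Real.cos (Real.pi / (q : ℝ))

/-- The modified floor `⌊t⌋′`: the unique integer `n` with `n < t ≤ n+1` if
`t > 0`, and `n ≤ t < n+1` if `t ≤ 0`. -/
noncomputable def mfloor (t : ℝ) : ℤ := if 0 < t then ⌈t⌉ - 1 else ⌊t⌋

/-- The nearest-`λ_q`-multiple function `⟨x⟩ = ⌊x/λ_q + 1/2⌋′`. -/
noncomputable def nearLam (q : ℕ) (x : ℝ) : ℤ := mfloor (x / lam q + 1 / 2)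

/-- The Hurwitz–Nakada map `f_q(x) = -1/x - ⟨-1/x⟩·λ_q`, `f_q(0) = 0`. -/
noncomputable def fq (q : ℕ) (x : ℝ) : ℝ :=
  if x = 0 then 0 else -1 / x - (nearLam q (-1 / x) : ℝ) * lam q

namespace Stmt19Aux
open Real

noncomputable def S (q k : ℕ) : ℝ := Real.sin (k * (Real.pi / q))
noncomputable def X (q k : ℕ) : ℝ := -S q k / S q (k+1)
noncomputable def Y (q k : ℕ) : ℝ := -(S q k + S q (k+1)) / (S q (k+1) + S q (k+2))

variable {h q : ℕ}


lemma theta_pos (hq : q = 2*h+3) : 0 < Real.pi / q := by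
  apply div_pos Real.pi_pos
  exact_mod_cast (by omega : 0 < q)

lemma S_pos (hq : q = 2*h+3) {k : ℕ} (h1 : 1 ≤ k) (h2 : k < q) : 0 < S q k := by
  have hθ := theta_pos hq
  apply Real.sin_pos_of_pos_of_lt_pi
  · have : (1:ℝ) ≤ k := by exact_mod_cast h1
    nlinarith
  · have hk : (k:ℝ) < q := by exact_mod_cast h2
    have hq0 : (0:ℝ) < q := by exact_mod_cast (by omega : 0 < q)
    calc (k:ℝ) * (π/q) < q * (π/q) := by
          exact mul_lt_mul_of_pos_right hk hθ
      _ = π := by field_simp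

lemma S_nonneg (hq : q = 2*h+3) {k : ℕ} (h2 : k ≤ q) : 0 ≤ S q k := by
  have hθ := theta_pos hq
  apply Real.sin_nonneg_of_nonneg_of_le_pi
  · positivity
  · have hk : (k:ℝ) ≤ q := by exact_mod_cast h2
    have hq0 : (0:ℝ) < q := by exact_mod_cast (by omega : 0 < q)
    calc (k:ℝ) * (π/q) ≤ q * (π/q) := by
          exact mul_le_mul_of_nonneg_right hk hθ.le
      _ = π := by field_simp

lemma S_rec (q k : ℕ) : S q (k+2) = lam q * S q (k+1) - S q k := by
  unfold S lam
  have e1 : ((k+2:ℕ):ℝ) * (π/q) = ((k+1:ℕ):ℝ)*(π/q) + π/q := by push_cast; ring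
  have e2 : ((k:ℕ):ℝ) * (π/q) = ((k+1:ℕ):ℝ)*(π/q) - π/q := by push_cast; ring
  rw [e1, e2, Real.sin_add, Real.sin_sub]
  ring

lemma S_sym (hq : q = 2*h+3) : S q (h+2) = S q (h+1) := by
  unfold S
  have hq0 : (q:ℝ) ≠ 0 := by
    exact_mod_cast (by omega : q ≠ 0)
  have e : ((h+2:ℕ):ℝ)*(π/q) = π - ((h+1:ℕ):ℝ)*(π/q) := by
    subst hq
    field_simp
    push_cast
    ring
  rw [e, Real.sin_pi_sub]

lemma S_mono (hq : q = 2*h+3) {a b : ℕ} (hab : a < b) (hb : b ≤ h+1) : S q a < S q b := by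
  have hθ := theta_pos hq
  have hq0 : (0:ℝ) < q := by exact_mod_cast (by omega : 0 < q)
  have hbu : (b:ℝ) * (π/q) ≤ π/2 := by
    have h2b : (2*b:ℝ) ≤ q := by
      have : 2*b ≤ q := by omega
      exact_mod_cast this
    have e : (b:ℝ)*(π/q) = (b*π)/q := by ring
    rw [e, div_le_div_iff₀ hq0 (by norm_num : (0:ℝ) < 2)]
    nlinarith [Real.pi_pos]
  have hau : (a:ℝ) * (π/q) ≤ π/2 := by
    have : (a:ℝ) * (π/q) ≤ (b:ℝ)*(π/q) := by
      have : (a:ℝ) ≤ b := by exact_mod_cast hab.le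
      nlinarith
    linarith
  have han : (0:ℝ) ≤ (a:ℝ) * (π/q) := by positivity
  have hbn : (0:ℝ) ≤ (b:ℝ) * (π/q) := by positivity
  apply Real.strictMonoOn_sin
  · constructor
    · linarith [Real.pi_pos]
    · exact hau
  · constructor
    · linarith [Real.pi_pos]
    · exact hbu
  · have : (a:ℝ) < b := by exact_mod_cast hab
    nlinarith

lemma lam_pos (hq : q = 2*h+3) : 0 < lam q := by
  unfold lam
  have hθ := theta_pos hq
  have : π/q < π/2 := by
    have hq0 : (0:ℝ) < q := by exact_mod_cast (by omega : 0 < q)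
    have h3 : (3:ℝ) ≤ q := by exact_mod_cast (by omega : 3 ≤ q)
    rw [div_lt_div_iff₀ hq0 (by norm_num)]
    nlinarith [Real.pi_pos]
  have := Real.cos_pos_of_mem_Ioo (Set.mem_Ioo.2 ⟨by linarith [Real.pi_pos], this⟩)
  linarith

lemma lam_ge_one (hq : q = 2*h+3) : 1 ≤ lam q := by
  unfold lam
  have hq0 : (0:ℝ) < q := by exact_mod_cast (by omega : 0 < q)
  have h3 : (3:ℝ) ≤ q := by exact_mod_cast (by omega : 3 ≤ q)
  have hle : π/q ≤ π/3 := by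
    rw [div_le_div_iff₀ hq0 (by norm_num)]
    nlinarith [Real.pi_pos]
  have := Real.cos_le_cos_of_nonneg_of_le_pi (by positivity)
    (by linarith [Real.pi_pos, Real.pi_gt_three]) hle
  rw [Real.cos_pi_div_three] at this
  linarith

lemma lam_lt_two (hq : q = 2*h+3) : lam q < 2 := by
  unfold lam
  have hθ := theta_pos hq
  have hle : π/q ≤ π := by
    apply div_le_self Real.pi_pos.le
    exact_mod_cast (by omega : 1 ≤ q)
  have := Real.cos_lt_cos_of_nonneg_of_le_pi (le_refl (0:ℝ)) hle hθ
  rw [Real.cos_zero] at this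
  linarith



lemma fq_eq (q : ℕ) (x r : ℝ) (n : ℤ) (hlam : 0 < lam q) (hx : x ≠ 0)
    (hinv : -1 / x = r + n * lam q) (h1 : -(lam q) / 2 < r) (h2 : r ≤ lam q / 2)
    (hn : 1 ≤ n) : fq q x = r := by
  have hL : lam q ≠ 0 := hlam.ne'
  have hrl : -(1:ℝ)/2 < r / lam q := by
    rw [lt_div_iff₀ hlam]; linarith
  have hru : r / lam q ≤ 1/2 := by
    rw [div_le_iff₀ hlam]; linarith
  have hn' : (1:ℝ) ≤ n := by exact_mod_cast hn
  have hT : (-1/x) / lam q + 1/2 = r / lam q + n + 1/2 := by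
    rw [hinv]; field_simp
  have hnear : nearLam q (-1/x) = n := by
    unfold nearLam mfloor
    rw [hT, if_pos (by linarith)]
    have : ⌈r / lam q + n + 1/2⌉ = n + 1 := by
      rw [Int.ceil_eq_iff]
      push_cast
      constructor <;> linarith
    omega
  unfold fq
  rw [if_neg hx, hnear, hinv]
  push_cast
  ring




lemma S_zero (q : ℕ) : S q 0 = 0 := by simp [S]

lemma X_zero (q : ℕ) : X q 0 = 0 := by simp [X, S_zero]

lemma t1X (hq : q = 2*h+3) {k : ℕ} (hk : k ≤ h) :
    -1 / (X q k + lam q) = X q (k+1) := by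
  have h1 : 0 < S q (k+1) := S_pos hq (by omega) (by omega)
  have h2 : 0 < S q (k+2) := S_pos hq (by omega) (by omega)
  have hr := S_rec q k
  have hden : X q k + lam q = S q (k+2) / S q (k+1) := by
    unfold X
    field_simp
    linarith
  rw [hden, X]
  rw [div_div_eq_mul_div, neg_one_mul, neg_div]

lemma t1Y (hq : q = 2*h+3) {k : ℕ} (hk : k + 1 ≤ h) :
    -1 / (Y q k + lam q) = Y q (k+1) := by
  have h1 : 0 < S q (k+1) := S_pos hq (by omega) (by omega)
  have h2 : 0 < S q (k+2) := S_pos hq (by omega) (by omega)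
  have h3 : 0 < S q (k+3) := S_pos hq (by omega) (by omega)
  have h0 : 0 ≤ S q k := S_nonneg hq (by omega)
  have hr1 := S_rec q k
  have hr2 := S_rec q (k+1)
  have hd1 : 0 < S q (k+1) + S q (k+2) := by linarith
  have hd2 : 0 < S q (k+2) + S q (k+3) := by linarith
  have hr2' : S q (k+3) = lam q * S q (k+2) - S q (k+1) := hr2
  have key : -(S q k + S q (k+1)) + lam q * (S q (k+1) + S q (k+2))
      = S q (k+2) + S q (k+3) := by
    linear_combination -hr1 - hr2'
  have hden : Y q k + lam q = (S q (k+2) + S q (k+3)) / (S q (k+1) + S q (k+2)) := by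
    unfold Y
    field_simp
    linear_combination key
  rw [hden, Y]
  rw [div_div_eq_mul_div, neg_one_mul, neg_div]



lemma Y_h (hq : q = 2*h+3) : Y q h = -(lam q) / 2 := by
  have h1 : 0 < S q (h+1) := S_pos hq (by omega) (by omega)
  have hr : S q (h+2) = lam q * S q (h+1) - S q h := S_rec q h
  rw [S_sym hq] at hr
  unfold Y
  rw [S_sym hq]
  rw [div_eq_div_iff (by linarith) (by norm_num : (2:ℝ) ≠ 0)]
  linear_combination (-2:ℝ) * hr

lemma X_h (hq : q = 2*h+3) : X q h = 1 - lam q := by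
  have h1 : 0 < S q (h+1) := S_pos hq (by omega) (by omega)
  have hr : S q (h+2) = lam q * S q (h+1) - S q h := S_rec q h
  rw [S_sym hq] at hr
  unfold X
  rw [div_eq_iff h1.ne']
  linear_combination -hr

lemma Y_zero (hq : q = 2*h+3) : Y q 0 = -1 / (1 + lam q) := by
  have h1 : 0 < S q 1 := S_pos hq (by omega) (by omega)
  have hr : S q 2 = lam q * S q 1 - S q 0 := S_rec q 0
  rw [S_zero q] at hr
  have hlam := lam_pos hq
  unfold Y
  rw [S_zero q]
  have e1 : S q (0+1) = S q 1 := by norm_num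
  have e2 : S q (0+2) = S q 2 := by norm_num
  rw [e1, e2, hr]
  rw [div_eq_div_iff (by nlinarith) (by nlinarith : (1:ℝ) + lam q ≠ 0)]
  ring

lemma t2X (hq : q = 2*h+3) : -1 / (X q h + 2 * lam q) = Y q 0 := by
  rw [X_h hq, Y_zero hq]
  have e : 1 - lam q + 2 * lam q = 1 + lam q := by ring
  rw [e]

lemma X_nonpos (hq : q = 2*h+3) {k : ℕ} (hk : k ≤ h+1) : X q k ≤ 0 := by
  have h1 : 0 < S q (k+1) := S_pos hq (by omega) (by omega)
  have h0 : 0 ≤ S q k := S_nonneg hq (by omega)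
  unfold X
  apply div_nonpos_of_nonpos_of_nonneg <;> linarith

lemma X_neg (hq : q = 2*h+3) {k : ℕ} (h1k : 1 ≤ k) (hk : k ≤ h+1) : X q k < 0 := by
  have h1 : 0 < S q (k+1) := S_pos hq (by omega) (by omega)
  have h0 : 0 < S q k := S_pos hq (by omega) (by omega)
  unfold X
  apply div_neg_of_neg_of_pos <;> linarith

lemma Y_neg (hq : q = 2*h+3) {k : ℕ} (hk : k ≤ h) : Y q k < 0 := by
  have h1 : 0 < S q (k+1) := S_pos hq (by omega) (by omega)
  have h2 : 0 < S q (k+2) := S_pos hq (by omega) (by omega)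
  have h0 : 0 ≤ S q k := S_nonneg hq (by omega)
  unfold Y
  apply div_neg_of_neg_of_pos <;> linarith

lemma X_gt (hq : q = 2*h+3) {k : ℕ} (hk : k + 1 ≤ h) : -(lam q) / 2 < X q k := by
  have h1 : 0 < S q (k+1) := S_pos hq (by omega) (by omega)
  have hr := S_rec q k
  have hm : S q k < S q (k+2) := S_mono hq (by omega) (by omega)
  unfold X
  rw [neg_div, neg_div, neg_lt_neg_iff, div_lt_div_iff₀ h1 (by norm_num : (0:ℝ) < 2)]
  linarith

lemma Y_gt (hq : q = 2*h+3) {k : ℕ} (hk : k + 1 ≤ h) : -(lam q) / 2 < Y q k := by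
  have h1 : 0 < S q (k+1) := S_pos hq (by omega) (by omega)
  have h2 : 0 < S q (k+2) := S_pos hq (by omega) (by omega)
  have hr1 := S_rec q k
  have hr2 : S q (k+3) = lam q * S q (k+2) - S q (k+1) := S_rec q (k+1)
  have hm1 : S q k < S q (k+2) := S_mono hq (by omega) (by omega)
  have hm2 : S q (k+1) < S q (k+3) := by
    rcases Nat.lt_or_ge (k+3) (h+2) with hlt | hge
    · exact S_mono hq (by omega) (by omega)
    · have : k + 3 = h + 2 := by omega
      rw [this, S_sym hq]
      have : k + 1 = h := by omega
      rw [this]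
      exact S_mono hq (by omega) (by omega)
  unfold Y
  rw [neg_div, neg_div, neg_lt_neg_iff, div_lt_div_iff₀ (by linarith) (by norm_num : (0:ℝ) < 2)]
  linarith

lemma fq_X (hq : q = 2*h+3) {k : ℕ} (hk : k + 1 ≤ h) : fq q (X q (k+1)) = X q k := by
  have ht := t1X hq (by omega : k ≤ h)
  have hXneg : X q (k+1) < 0 := X_neg hq (by omega) (by omega)
  have hsum : X q k + lam q ≠ 0 := by
    intro h0
    rw [h0, div_zero] at ht
    exact hXneg.ne ht.symm
  have hinv : -1 / X q (k+1) = X q k + lam q := by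
    rw [← ht]
    field_simp
  apply fq_eq q _ _ 1 (lam_pos hq) hXneg.ne
  · rw [hinv]; push_cast; ring
  · exact X_gt hq hk
  · have := X_nonpos hq (by omega : k ≤ h+1)
    have := lam_pos hq
    linarith
  · norm_num

lemma fq_Y (hq : q = 2*h+3) {k : ℕ} (hk : k + 1 ≤ h) : fq q (Y q (k+1)) = Y q k := by
  have ht := t1Y hq hk
  have hYneg : Y q (k+1) < 0 := Y_neg hq (by omega)
  have hsum : Y q k + lam q ≠ 0 := by
    intro h0
    rw [h0, div_zero] at ht
    exact hYneg.ne ht.symm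
  have hinv : -1 / Y q (k+1) = Y q k + lam q := by
    rw [← ht]
    field_simp
  apply fq_eq q _ _ 1 (lam_pos hq) hYneg.ne
  · rw [hinv]; push_cast; ring
  · exact Y_gt hq hk
  · have := Y_neg hq (by omega : k ≤ h)
    have := lam_pos hq
    linarith
  · norm_num

lemma fq_Y0 (hq : q = 2*h+3) : fq q (Y q 0) = X q h := by
  have hlam := lam_pos hq
  have h1 := lam_ge_one hq
  have h2 := lam_lt_two hq
  have hY0 : Y q 0 = -1 / (1 + lam q) := Y_zero hq
  have hYne : Y q 0 ≠ 0 := by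
    rw [hY0]
    intro hc
    rw [div_eq_zero_iff] at hc
    rcases hc with hc | hc <;> [norm_num at hc; linarith]
  apply fq_eq q _ _ 2 hlam hYne
  · rw [hY0, X_h hq]
    push_cast
    have hne : (1:ℝ) + lam q ≠ 0 := by linarith
    field_simp
    ring
  · rw [X_h hq]; linarith
  · rw [X_h hq]; linarith
  · norm_num



lemma iterX (hq : q = 2*h+3) {k : ℕ} (hk : k ≤ h) :
    (fun x : ℝ => -1 / (x + lam q))^[k] 0 = X q k := by
  induction k with
  | zero => simp [X_zero q]
  | succ n ih =>
    rw [Function.iterate_succ_apply', ih (by omega)]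
    exact t1X hq (by omega)

lemma iterY (hq : q = 2*h+3) {k : ℕ} (hk : k ≤ h) :
    (fun x : ℝ => -1 / (x + lam q))^[k] (Y q 0) = Y q k := by
  induction k with
  | zero => simp
  | succ n ih =>
    rw [Function.iterate_succ_apply', ih (by omega)]
    exact t1Y hq (by omega)

lemma fq_zero (q : ℕ) : fq q 0 = 0 := by simp [fq]

lemma orbitY (hq : q = 2*h+3) {i : ℕ} (hi : i ≤ h) :
    (fq q)^[i] (-(lam q) / 2) = Y q (h - i) := by
  induction i with
  | zero => simpa using (Y_h hq).symm
  | succ n ih =>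
    rw [Function.iterate_succ_apply', ih (by omega)]
    have e : h - n = (h - (n+1)) + 1 := by omega
    rw [e, fq_Y hq (by omega)]

lemma orbitX (hq : q = 2*h+3) {i : ℕ} (hi : i ≤ h) :
    (fq q)^[h + 1 + i] (-(lam q) / 2) = X q (h - i) := by
  induction i with
  | zero =>
    rw [Function.iterate_succ_apply', orbitY hq (le_refl h)]
    simpa using fq_Y0 hq
  | succ n ih =>
    have e : h + 1 + (n+1) = (h + 1 + n) + 1 := by omega
    rw [e, Function.iterate_succ_apply', ih (by omega)]
    have e2 : h - n = (h - (n+1)) + 1 := by omega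
    rw [e2, fq_X hq (by omega)]

lemma orbit_ne_zero (hq : q = 2*h+3) {n : ℕ} (hn : n ≤ 2*h) :
    (fq q)^[n] (-(lam q) / 2) ≠ 0 := by
  rcases le_or_gt n h with hle | hgt
  · rw [orbitY hq hle]
    exact (Y_neg hq (by omega)).ne
  · have e : n = h + 1 + (n - h - 1) := by omega
    rw [e, orbitX hq (by omega)]
    exact (X_neg hq (by omega) (by omega)).ne

end Stmt19Aux

/-- for odd `q = 2h+3`, the `f_q`-orbit of `-λ_q/2` satisfies
`f_q^i(-λ_q/2) = θ_1^{∘(h-i)}(θ_2(θ_1^{∘h}(0)))` for `0 ≤ i ≤ h` and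
`f_q^{h+1+i}(-λ_q/2) = θ_1^{∘(h-i)}(0)` for `0 ≤ i ≤ h` (with
`θ_1(x) = -1/(x+λ_q)`, `θ_2(x) = -1/(x+2λ_q)`). In particular
`f_q^{q-2}(-λ_q/2) = 0` and the `q-1` points `f_q^i(-λ_q/2)`, `0 ≤ i ≤ q-2`, are
pairwise distinct, so the orbit has exactly `q-1 = κ_q + 1` elements. -/
theorem stmt19 (h q : ℕ) (hq : q = 2 * h + 3) :
    let t1 : ℝ → ℝ := fun x => -1 / (x + lam q)
    let t2 : ℝ → ℝ := fun x => -1 / (x + 2 * lam q)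
    (∀ i ≤ h, (fq q)^[i] (-(lam q) / 2) = t1^[h - i] (t2 (t1^[h] 0))) ∧
    (∀ i ≤ h, (fq q)^[h + 1 + i] (-(lam q) / 2) = t1^[h - i] 0) ∧
    (fq q)^[q - 2] (-(lam q) / 2) = 0 ∧
    Function.Injective (fun i : Fin (q - 1) => (fq q)^[(i : ℕ)] (-(lam q) / 2)) ∧
    (∀ n : ℕ, (fq q)^[n] (-(lam q) / 2) ∈
      Set.range (fun i : Fin (q - 1) => (fq q)^[(i : ℕ)] (-(lam q) / 2))) := by
  intro t1 t2
  have hq' : q = 2*h+3 := hq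
  have hiterX : t1^[h] 0 = Stmt19Aux.X q h := Stmt19Aux.iterX hq' (le_refl h)
  have ht2 : t2 (Stmt19Aux.X q h) = Stmt19Aux.Y q 0 := Stmt19Aux.t2X hq'
  have hC : (fq q)^[q - 2] (-(lam q) / 2) = 0 := by
    have e : q - 2 = h + 1 + h := by omega
    rw [e, Stmt19Aux.orbitX hq' (le_refl h)]
    simpa using Stmt19Aux.X_zero q
  refine ⟨?_, ?_, hC, ?_, ?_⟩
  · intro i hi
    rw [hiterX, ht2, Stmt19Aux.iterY hq' (by omega : h - i ≤ h)]
    exact Stmt19Aux.orbitY hq' hi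
  · intro i hi
    rw [Stmt19Aux.iterX hq' (by omega : h - i ≤ h)]
    exact Stmt19Aux.orbitX hq' hi
  · intro a b hab
    simp only at hab
    by_contra hne
    have hne' : (a : ℕ) ≠ (b : ℕ) := fun hc => hne (Fin.ext hc)
    have key : ∀ i j : ℕ, i < j → j ≤ q - 2 →
        (fq q)^[i] (-(lam q)/2) = (fq q)^[j] (-(lam q)/2) → False := by
      intro i j hij hj heq
      have h1 : (fq q)^[q-2-j+j] (-(lam q)/2) = 0 := by
        rw [(by omega : q-2-j+j = q-2)]
        exact hC
      rw [Function.iterate_add_apply, ← heq, ← Function.iterate_add_apply] at h1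
      exact Stmt19Aux.orbit_ne_zero hq' (by omega : q-2-j+i ≤ 2*h) h1
    have ha : (a:ℕ) ≤ q - 2 := by omega
    have hb : (b:ℕ) ≤ q - 2 := by omega
    rcases Nat.lt_or_ge (a:ℕ) (b:ℕ) with hlt | hge
    · exact key a b hlt hb hab
    · exact key b a (by omega) ha hab.symm
  · intro n
    rcases le_or_gt n (q-2) with hle | hgt
    · exact ⟨⟨n, by omega⟩, rfl⟩
    · refine ⟨⟨q-2, by omega⟩, ?_⟩
      simp only
      rw [hC]
      have e : n = (n - (q-2)) + (q-2) := by omega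
      rw [e, Function.iterate_add_apply, hC]
      exact (Function.iterate_fixed (Stmt19Aux.fq_zero q) _).symm
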